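/- arXiv:1703.05409 — 2 statements merged into one kernel-verified Lean document; each statement's English description precedes it below -/
import Mathlib

section
/- For every n ≥ 0, all complex roots of the independence polynomial I(F_n,x) of the n-th Fibonacci tree are real. -/
open Polynomial

noncomputable def indepPoly {V : Type*} [Finite V] (G : SimpleGraph V) : Polynomial ℝ :=
  haveI := Fintype.ofFinite V
  haveI := Classical.decPred fun s : Finset V => ∀ u ∈ s, ∀ v ∈ s, ¬G.Adj u v
  ∑ s ∈ Finset.univ.filter (fun s : Finset V => ∀ u ∈ s, ∀ v ∈ s, ¬G.Adj u v), X ^ s.card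


/-- Vertex type of the `n`-th Fibonacci tree. -/
def FibV : ℕ → Type
  | 0 => Unit
  | 1 => Bool
  | (n + 2) => FibV (n + 1) ⊕ FibV n ⊕ Unit

instance fibVFinite : ∀ n, Finite (FibV n)
  | 0 => inferInstanceAs (Finite Unit)
  | 1 => inferInstanceAs (Finite Bool)
  | (n + 2) =>
    haveI := fibVFinite (n + 1)
    haveI := fibVFinite n
    inferInstanceAs (Finite (FibV (n + 1) ⊕ FibV n ⊕ Unit))

/-- The root of the `n`-th Fibonacci tree. -/
def fibRoot : (n : ℕ) → FibV n
  | 0 => ()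
  | 1 => true
  | (_ + 2) => Sum.inr (Sum.inr ())

/-- The `n`-th Fibonacci tree: `F₀ = K₁`, `F₁ = K₂`, and `Fₙ` is a new root joined to the
roots of disjoint copies of `Fₙ₋₁` and `Fₙ₋₂`. -/
def fibGraph : (n : ℕ) → SimpleGraph (FibV n)
  | 0 => ⊥
  | 1 => ⊤
  | (n + 2) =>
    SimpleGraph.fromRel (fun a b =>
      match a, b with
      | Sum.inl a, Sum.inl b => (fibGraph (n + 1)).Adj a b
      | Sum.inr (Sum.inl a), Sum.inr (Sum.inl b) => (fibGraph n).Adj a b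
      | Sum.inr (Sum.inr _), Sum.inl b => b = fibRoot (n + 1)
      | Sum.inr (Sum.inr _), Sum.inr (Sum.inl b) => b = fibRoot n
      | _, _ => False)


lemma arg_pos_of_im_pos {z : ℂ} (h : 0 < z.im) : 0 < z.arg := by
  rcases lt_trichotomy z.arg 0 with hc | hc | hc
  · exact absurd (Complex.arg_neg_iff.1 hc) (by linarith)
  · have := Complex.arg_eq_zero_iff.1 hc
    linarith [this.2]
  · exact hc

lemma arg_lt_pi_of_im_pos {z : ℂ} (h : 0 < z.im) : z.arg < Real.pi :=
  Complex.arg_lt_pi_iff.2 (Or.inr (ne_of_gt h))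

lemma im_mul_conj_eq (u v : ℂ) :
    (u * (starRingEnd ℂ) v).im = ‖u‖ * ‖v‖ * Real.sin (u.arg - v.arg) := by
  have hur := Complex.norm_mul_cos_arg u
  have hui := Complex.norm_mul_sin_arg u
  have hvr := Complex.norm_mul_cos_arg v
  have hvi := Complex.norm_mul_sin_arg v
  simp only [Complex.mul_im, Complex.conj_re, Complex.conj_im, Real.sin_sub]
  rw [← hur, ← hui, ← hvr, ← hvi]
  ring

lemma arg_lt_arg_of_im {u v : ℂ} (hu : 0 < u.im) (hv : 0 < v.im)
    (h : (u * (starRingEnd ℂ) v).im < 0) : u.arg < v.arg := by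
  by_contra hle
  push_neg at hle
  have h1 : 0 ≤ u.arg - v.arg := sub_nonneg.2 hle
  have h2 : u.arg - v.arg ≤ Real.pi := by
    have := arg_lt_pi_of_im_pos hu
    have := arg_pos_of_im_pos hv
    linarith
  have hs := Real.sin_nonneg_of_nonneg_of_le_pi h1 h2
  rw [im_mul_conj_eq] at h
  nlinarith [mul_nonneg (mul_nonneg (norm_nonneg u) (norm_nonneg v)) hs]

/-- Adding one decreases the argument of a point in the upper half plane. -/
lemma arg_one_add_lt {w : ℂ} (hw : 0 < w.im) : (1 + w).arg < w.arg := by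
  apply arg_lt_arg_of_im (by simpa using hw) hw
  simp [Complex.add_im, Complex.mul_im, Complex.conj_im, Complex.conj_re]
  nlinarith

/-- The argument of a quotient, when the difference of arguments is in range. -/
lemma arg_div_eq {u v : ℂ} (hu : u ≠ 0) (hv : v ≠ 0)
    (h1 : -Real.pi < u.arg - v.arg) (h2 : u.arg - v.arg ≤ Real.pi) :
    (u / v).arg = u.arg - v.arg := by
  have hu' := Complex.norm_mul_exp_arg_mul_I u
  have hv' := Complex.norm_mul_exp_arg_mul_I v
  have habs : u / v = ((‖u‖ / ‖v‖ : ℝ) : ℂ) *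
      Complex.exp ((u.arg - v.arg : ℝ) * Complex.I) := by
    have hav : ((‖v‖ : ℝ) : ℂ) ≠ 0 := by
      simpa using (norm_ne_zero_iff.mpr hv)
    have hev : Complex.exp (v.arg * Complex.I) ≠ 0 := Complex.exp_ne_zero _
    conv_lhs => rw [← hu', ← hv']
    rw [mul_div_mul_comm, ← Complex.exp_sub, Complex.ofReal_div]
    congr 1
    push_cast
    ring_nf
  rw [habs, Complex.exp_mul_I]
  have hr : 0 < ‖u‖ / ‖v‖ :=
    div_pos (norm_pos_iff.mpr hu) (norm_pos_iff.mpr hv)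
  exact Complex.arg_mul_cos_add_sin_mul_I hr ⟨h1, h2⟩


def indepS {V : Type*} (G : SimpleGraph V) (s : Finset V) : Prop :=
  ∀ u ∈ s, ∀ v ∈ s, ¬G.Adj u v

open Classical in
noncomputable def ipoly {V : Type*} [Fintype V] (G : SimpleGraph V)
    (P : Finset V → Prop) : Polynomial ℝ :=
  ∑ s : Finset V, if indepS G s ∧ P s then (X : Polynomial ℝ) ^ s.card else 0

/-- finsets of a sum type are pairs of finsets -/
def finsetSumEquiv (α β : Type*) : Finset α × Finset β ≃ Finset (α ⊕ β) where
  toFun p := p.1.disjSum p.2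
  invFun s := (s.toLeft, s.toRight)
  left_inv p := by simp
  right_inv s := by simp [Finset.toLeft_disjSum_toRight]

lemma sum_finset_sumtype {α β M : Type*} [AddCommMonoid M] [Fintype α] [Fintype β]
    (f : Finset (α ⊕ β) → M) :
    ∑ s : Finset (α ⊕ β), f s = ∑ s1 : Finset α, ∑ s2 : Finset β, f (s1.disjSum s2) := by
  rw [← Equiv.sum_comp (finsetSumEquiv α β) f, Fintype.sum_prod_type]
  rfl

lemma sum_finset_unit {M : Type*} [AddCommMonoid M] (f : Finset Unit → M) :
    ∑ s : Finset Unit, f s = f ∅ + f {()} := by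
  have : (Finset.univ : Finset (Finset Unit)) = {∅, {()}} := by decide
  rw [this, Finset.sum_pair (by decide)]

section Join
variable {α β : Type*} [Fintype α] [Fintype β]
variable (G1 : SimpleGraph α) (G2 : SimpleGraph β) (r1 : α) (r2 : β)

def joinGraph : SimpleGraph (α ⊕ β ⊕ Unit) :=
  SimpleGraph.fromRel (fun a b =>
    match a, b with
    | Sum.inl a, Sum.inl b => G1.Adj a b
    | Sum.inr (Sum.inl a), Sum.inr (Sum.inl b) => G2.Adj a b
    | Sum.inr (Sum.inr _), Sum.inl b => b = r1
    | Sum.inr (Sum.inr _), Sum.inr (Sum.inl b) => b = r2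
    | _, _ => False)

lemma indepS_joinGraph (s1 : Finset α) (s2 : Finset β) (u : Finset Unit) :
    indepS (joinGraph G1 G2 r1 r2) (s1.disjSum (s2.disjSum u)) ↔
      indepS G1 s1 ∧ indepS G2 s2 ∧ (() ∈ u → (r1 ∉ s1 ∧ r2 ∉ s2)) := by
  simp only [indepS, joinGraph, SimpleGraph.fromRel_adj, Sum.forall,
    Finset.inl_mem_disjSum, Finset.inr_mem_disjSum]
  constructor
  · intro h
    refine ⟨fun a ha b hb hadj => h.1 a ha |>.1 b hb ⟨?_, Or.inl hadj⟩,
      fun a ha b hb hadj => h.2.1 a ha |>.2.1 b hb ⟨?_, Or.inl hadj⟩, ?_⟩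
    · intro h'
      simp only [Sum.inl.injEq] at h'
      subst h'
      exact G1.irrefl hadj
    · intro h'
      simp only [Sum.inr.injEq, Sum.inl.injEq] at h'
      subst h'
      exact G2.irrefl hadj
    · intro hu
      constructor
      · intro hr1
        exact h.2.2 () hu |>.1 r1 hr1 ⟨by simp, Or.inl rfl⟩
      · intro hr2
        exact h.2.2 () hu |>.2.1 r2 hr2 ⟨by simp, Or.inl rfl⟩
  · rintro ⟨h1, h2, hr⟩
    refine ⟨fun a ha => ⟨fun b hb => ?_, fun b hb => ?_, fun b hb => ?_⟩,
      fun a ha => ⟨fun b hb => ?_, fun b hb => ?_, fun b hb => ?_⟩,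
      fun a ha => ⟨fun b hb => ?_, fun b hb => ?_, fun b hb => ?_⟩⟩
    · rintro ⟨hne, hadj | hadj⟩
      · exact h1 a ha b hb hadj
      · exact h1 b hb a ha hadj
    · rintro ⟨hne, hadj | hadj⟩ <;> exact hadj
    · rintro ⟨hne, hadj | hadj⟩
      · exact hadj
      · exact (hr hb).1 (hadj ▸ ha)
    · rintro ⟨hne, hadj | hadj⟩ <;> exact hadj
    · rintro ⟨hne, hadj | hadj⟩
      · exact h2 a ha b hb hadj
      · exact h2 b hb a ha hadj
    · rintro ⟨hne, hadj | hadj⟩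
      · exact hadj
      · exact (hr hb).2 (hadj ▸ ha)
    · rintro ⟨hne, hadj | hadj⟩
      · exact (hr ha).1 (hadj ▸ hb)
      · exact hadj
    · rintro ⟨hne, hadj | hadj⟩
      · exact (hr ha).2 (hadj ▸ hb)
      · exact hadj
    · rintro ⟨hne, hadj | hadj⟩ <;> exact hne rfl

end Join

section JoinPoly
variable {α β : Type*} [Fintype α] [Fintype β]
variable (G1 : SimpleGraph α) (G2 : SimpleGraph β) (r1 : α) (r2 : β)

lemma ipoly_join_true :
    ipoly (joinGraph G1 G2 r1 r2) (fun _ => True) =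
      ipoly G1 (fun _ => True) * ipoly G2 (fun _ => True) +
        X * (ipoly G1 (fun s => r1 ∉ s) * ipoly G2 (fun s => r2 ∉ s)) := by
  classical
  unfold ipoly
  rw [sum_finset_sumtype]
  trans (∑ s1 : Finset α, ∑ s2 : Finset β,
      ((if indepS G1 s1 then (X : Polynomial ℝ) ^ s1.card else 0) *
        (if indepS G2 s2 then (X : Polynomial ℝ) ^ s2.card else 0) +
      X * ((if indepS G1 s1 ∧ r1 ∉ s1 then (X : Polynomial ℝ) ^ s1.card else 0) *
        (if indepS G2 s2 ∧ r2 ∉ s2 then (X : Polynomial ℝ) ^ s2.card else 0))))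
  · refine Finset.sum_congr rfl fun s1 _ => ?_
    rw [sum_finset_sumtype]
    refine Finset.sum_congr rfl fun s2 _ => ?_
    rw [sum_finset_unit]
    rw [indepS_joinGraph, indepS_joinGraph, Finset.card_disjSum, Finset.card_disjSum,
      Finset.card_disjSum, Finset.card_disjSum]
    by_cases h1 : indepS G1 s1 <;> by_cases h2 : indepS G2 s2 <;>
      by_cases h3 : r1 ∈ s1 <;> by_cases h4 : r2 ∈ s2 <;>
      simp [h1, h2, h3, h4, pow_add, pow_succ] <;> ring
  · rw [Finset.sum_mul_sum, Finset.sum_mul_sum]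
    simp only [and_true, Finset.mul_sum, Finset.sum_add_distrib]
    congr!

lemma ipoly_join_root :
    ipoly (joinGraph G1 G2 r1 r2) (fun s => Sum.inr (Sum.inr ()) ∉ s) =
      ipoly G1 (fun _ => True) * ipoly G2 (fun _ => True) := by
  classical
  unfold ipoly
  rw [sum_finset_sumtype]
  trans (∑ s1 : Finset α, ∑ s2 : Finset β,
      ((if indepS G1 s1 then (X : Polynomial ℝ) ^ s1.card else 0) *
        (if indepS G2 s2 then (X : Polynomial ℝ) ^ s2.card else 0)))
  · refine Finset.sum_congr rfl fun s1 _ => ?_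
    rw [sum_finset_sumtype]
    refine Finset.sum_congr rfl fun s2 _ => ?_
    rw [sum_finset_unit]
    rw [indepS_joinGraph, indepS_joinGraph, Finset.card_disjSum, Finset.card_disjSum,
      Finset.card_disjSum, Finset.card_disjSum]
    by_cases h1 : indepS G1 s1 <;> by_cases h2 : indepS G2 s2 <;>
      simp [h1, h2, pow_add, Finset.inr_mem_disjSum]
  · rw [Finset.sum_mul_sum]
    simp only [and_true]

end JoinPoly

lemma ipoly_congr_inst {V : Type*} (i1 i2 : Fintype V) (G : SimpleGraph V)
    (P : Finset V → Prop) : @ipoly V i1 G P = @ipoly V i2 G P := by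
  cases Subsingleton.elim i1 i2
  rfl

-- base cases
lemma ipoly_unit_true : ipoly (⊥ : SimpleGraph Unit) (fun _ => True) = 1 + X := by
  classical
  unfold ipoly
  rw [sum_finset_unit]
  simp [indepS]

lemma ipoly_unit_root : ipoly (⊥ : SimpleGraph Unit) (fun s => () ∉ s) = 1 := by
  classical
  unfold ipoly
  rw [sum_finset_unit]
  simp [indepS]

lemma univ_finset_bool : (Finset.univ : Finset (Finset Bool)) =
    {∅, {false}, {true}, {false, true}} := by decide

lemma ipoly_bool_true : ipoly (⊤ : SimpleGraph Bool) (fun _ => True) = 1 + 2 * X := by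
  classical
  unfold ipoly
  rw [univ_finset_bool]
  rw [Finset.sum_insert (by decide), Finset.sum_insert (by decide),
    Finset.sum_insert (by decide), Finset.sum_singleton]
  have h1 : indepS (⊤ : SimpleGraph Bool) ∅ := by intro u hu; simp at hu
  have h2 : indepS (⊤ : SimpleGraph Bool) {false} := by
    intro u hu v hv; simp at hu hv; subst hu; subst hv; simp
  have h3 : indepS (⊤ : SimpleGraph Bool) {true} := by
    intro u hu v hv; simp at hu hv; subst hu; subst hv; simp
  have h4 : ¬ indepS (⊤ : SimpleGraph Bool) {false, true} := by
    intro h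
    exact h false (by simp) true (by simp) (by simp)
  rw [if_pos ⟨h1, trivial⟩, if_pos ⟨h2, trivial⟩, if_pos ⟨h3, trivial⟩,
    if_neg (by simp [h4])]
  simp
  ring

lemma ipoly_bool_root : ipoly (⊤ : SimpleGraph Bool) (fun s => true ∉ s) = 1 + X := by
  classical
  unfold ipoly
  rw [univ_finset_bool]
  rw [Finset.sum_insert (by decide), Finset.sum_insert (by decide),
    Finset.sum_insert (by decide), Finset.sum_singleton]
  have h2 : indepS (⊤ : SimpleGraph Bool) {false} := by
    intro u hu v hv; simp at hu hv; subst hu; subst hv; simp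
  rw [if_pos ⟨by intro u hu; simp at hu, by simp⟩, if_pos ⟨h2, by simp⟩,
    if_neg (by simp), if_neg (by simp)]
  simp


noncomputable def fibP : ℕ → Polynomial ℝ × Polynomial ℝ
  | 0 => (1 + X, 1)
  | 1 => (1 + 2 * X, 1 + X)
  | (n + 2) =>
      ((fibP (n + 1)).1 * (fibP n).1 + X * ((fibP (n + 1)).2 * (fibP n).2),
       (fibP (n + 1)).1 * (fibP n).1)

lemma fibGraph_succ_eq (n : ℕ) :
    fibGraph (n + 2) = joinGraph (fibGraph (n + 1)) (fibGraph n)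
      (fibRoot (n + 1)) (fibRoot n) := by
  show SimpleGraph.fromRel _ = SimpleGraph.fromRel _
  congr 1
  funext a b
  rcases a with a | a | a <;> rcases b with b | b | b <;> rfl

lemma ipoly_fib : ∀ n : ℕ,
    @ipoly (FibV n) (Fintype.ofFinite _) (fibGraph n) (fun _ => True) = (fibP n).1 ∧
    @ipoly (FibV n) (Fintype.ofFinite _) (fibGraph n) (fun s => fibRoot n ∉ s) = (fibP n).2
  | 0 => by
      constructor
      · rw [ipoly_congr_inst _ (inferInstanceAs (Fintype Unit))]
        exact ipoly_unit_true
      · rw [ipoly_congr_inst _ (inferInstanceAs (Fintype Unit))]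
        exact ipoly_unit_root
  | 1 => by
      constructor
      · rw [ipoly_congr_inst _ (inferInstanceAs (Fintype Bool))]
        exact ipoly_bool_true
      · rw [ipoly_congr_inst _ (inferInstanceAs (Fintype Bool))]
        exact ipoly_bool_root
  | (n + 2) => by
      obtain ⟨ih1t, ih1r⟩ := ipoly_fib (n + 1)
      obtain ⟨ih0t, ih0r⟩ := ipoly_fib n
      constructor
      · show @ipoly (FibV (n + 1) ⊕ FibV n ⊕ Unit) (Fintype.ofFinite _)
          (fibGraph (n + 2)) (fun _ => True) = (fibP (n + 2)).1
        rw [fibGraph_succ_eq,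
          ipoly_congr_inst _ (@instFintypeSum _ _ (Fintype.ofFinite (FibV (n + 1)))
            (@instFintypeSum _ _ (Fintype.ofFinite (FibV n)) inferInstance)),
          @ipoly_join_true _ _ (Fintype.ofFinite _) (Fintype.ofFinite _) _ _ _ _, ih1t, ih0t, ih1r, ih0r]
        simp [fibP]
      · show @ipoly (FibV (n + 1) ⊕ FibV n ⊕ Unit) (Fintype.ofFinite _)
          (fibGraph (n + 2)) (fun s => Sum.inr (Sum.inr ()) ∉ s) = (fibP (n + 2)).2
        rw [fibGraph_succ_eq,
          ipoly_congr_inst _ (@instFintypeSum _ _ (Fintype.ofFinite (FibV (n + 1)))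
            (@instFintypeSum _ _ (Fintype.ofFinite (FibV n)) inferInstance)),
          @ipoly_join_root _ _ (Fintype.ofFinite _) (Fintype.ofFinite _) _ _ _ _, ih1t, ih0t]
        simp [fibP]

lemma im_pos_of_arg {z : ℂ} (hz : z ≠ 0) (h1 : 0 < z.arg) (h2 : z.arg < Real.pi) :
    0 < z.im := by
  have := Complex.norm_mul_sin_arg z
  have hs := Real.sin_pos_of_pos_of_lt_pi h1 h2
  have ha := norm_pos_iff.mpr hz
  nlinarith

lemma sector_step {x u v : ℂ} (hx : 0 < x.im) (hu : u ≠ 0) (hv : v ≠ 0)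
    (h1 : 0 < u.arg) (h2 : 0 < v.arg) (h3 : u.arg + v.arg < x.arg) :
    (1 + x / (u * v)) ≠ 0 ∧ 0 < (1 + x / (u * v)).arg ∧
      v.arg + (1 + x / (u * v)).arg < x.arg := by
  have hxpi : x.arg < Real.pi := arg_lt_pi_of_im_pos hx
  have hx0 : x ≠ 0 := fun h => by simp [h] at hx
  have hpi := Real.pi_pos
  have huv : (u * v).arg = u.arg + v.arg :=
    Complex.arg_mul hu hv ⟨by linarith, by linarith⟩
  have huv0 : u * v ≠ 0 := mul_ne_zero hu hv
  set w := x / (u * v) with hw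
  have hargw : w.arg = x.arg - (u.arg + v.arg) := by
    rw [hw, arg_div_eq hx0 huv0] <;> rw [huv] <;> linarith
  have hw0 : w ≠ 0 := div_ne_zero hx0 huv0
  have hwim : 0 < w.im := im_pos_of_arg hw0 (by linarith [hargw]) (by rw [hargw]; linarith)
  have him : 0 < (1 + w).im := by simpa using hwim
  have hlt : (1 + w).arg < w.arg := arg_one_add_lt hwim
  refine ⟨fun h => by simp [h] at him, arg_pos_of_im_pos him, ?_⟩
  rw [hargw] at hlt; linarith

section Main
variable (z : ℂ)

noncomputable def aa (n : ℕ) : ℂ := Polynomial.aeval z (fibP n).1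
noncomputable def bb (n : ℕ) : ℂ := Polynomial.aeval z (fibP n).2

lemma aa0 : aa z 0 = 1 + z := by simp [aa, fibP, map_ofNat]
lemma aa1 : aa z 1 = 1 + 2 * z := by simp [aa, fibP, map_ofNat]
lemma bb0 : bb z 0 = 1 := by simp [bb, fibP]
lemma bb1 : bb z 1 = 1 + z := by simp [bb, fibP]
lemma aa_rec (n : ℕ) : aa z (n + 2) = aa z (n + 1) * aa z n + z * (bb z (n + 1) * bb z n) := by
  simp [aa, bb, fibP]
lemma bb_rec (n : ℕ) : bb z (n + 2) = aa z (n + 1) * aa z n := by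
  simp [aa, bb, fibP]

def SInv (n : ℕ) : Prop :=
  aa z n ≠ 0 ∧ bb z n ≠ 0 ∧ aa z (n + 1) ≠ 0 ∧ bb z (n + 1) ≠ 0 ∧
    0 < (aa z n / bb z n).arg ∧ 0 < (aa z (n + 1) / bb z (n + 1)).arg ∧
    (aa z n / bb z n).arg + (aa z (n + 1) / bb z (n + 1)).arg < z.arg

lemma sinv_zero (hz : 0 < z.im) : SInv z 0 := by
  have h1z : (1 + z) ≠ 0 := fun h => by
    have : (1 + z).im = 0 := by rw [h]; simp
    simp at this; simp [this] at hz
  have h12z : (1 + 2*z) ≠ 0 := fun h => by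
    have : (1 + 2*z).im = 0 := by rw [h]; simp
    simp at this; simp [this] at hz
  have him1 : 0 < (1 + z).im := by simpa using hz
  have him2 : 0 < (1 + 2*z).im := by simp; linarith
  have hlt : (1 + z).arg < (1 + 2*z).arg := by
    apply arg_lt_arg_of_im him1 him2
    simp [Complex.add_im, Complex.mul_im, Complex.conj_im, Complex.conj_re,
      Complex.mul_re]
    nlinarith
  have harg2 : (1 + 2*z).arg < z.arg := by
    have h2z : 0 < (2*z).im := by simp; linarith
    have := arg_one_add_lt h2z
    have he : (2*z).arg = z.arg := by
      have : (2:ℂ) * z = ((2:ℝ):ℂ) * z := by norm_num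
      rw [this, Complex.arg_real_mul z (by norm_num : (0:ℝ) < 2)]
    linarith
  have hpos1 : 0 < (1 + z).arg := arg_pos_of_im_pos him1
  have hpos2 : 0 < (1 + 2*z).arg := arg_pos_of_im_pos him2
  have hpi2 : (1 + 2*z).arg < Real.pi := arg_lt_pi_of_im_pos him2
  have hdiv : ((1 + 2*z) / (1 + z)).arg = (1 + 2*z).arg - (1 + z).arg := by
    apply arg_div_eq h12z h1z <;> [skip; skip] <;>
      [linarith [Real.pi_pos]; linarith]
  refine ⟨?_, ?_, ?_, ?_, ?_, ?_, ?_⟩ <;>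
    simp only [zero_add, aa0, aa1, bb0, bb1, div_one]
  · exact h1z
  · exact one_ne_zero
  · exact h12z
  · exact h1z
  · exact hpos1
  · rw [hdiv]; linarith
  · rw [hdiv]; linarith

lemma sinv_step (hz : 0 < z.im) (n : ℕ) (h : SInv z n) : SInv z (n + 1) := by
  obtain ⟨ha0, hb0, ha1, hb1, hf0, hf1, hsum⟩ := h
  set u := aa z n / bb z n with hu
  set v := aa z (n + 1) / bb z (n + 1) with hv
  have hu0 : u ≠ 0 := fun h => by rw [h, Complex.arg_zero] at hf0; exact lt_irrefl 0 hf0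
  have hv0 : v ≠ 0 := fun h => by rw [h, Complex.arg_zero] at hf1; exact lt_irrefl 0 hf1
  have hstep := sector_step hz hu0 hv0 hf0 hf1 hsum
  have hb2 : bb z (n + 2) ≠ 0 := by rw [bb_rec]; exact mul_ne_zero ha1 ha0
  have hfrec : aa z (n + 2) / bb z (n + 2) = 1 + z / (u * v) := by
    rw [aa_rec, bb_rec, add_div, div_self (mul_ne_zero ha1 ha0), hu, hv]
    congr 1
    field_simp
  have ha2 : aa z (n + 2) ≠ 0 := by
    intro h
    rw [h, zero_div] at hfrec
    exact hstep.1 hfrec.symm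
  exact ⟨ha1, hb1, ha2, hb2, hf1, by rw [hfrec]; exact hstep.2.1,
    by rw [hfrec]; exact hstep.2.2⟩

end Main

lemma aa_ne_zero {z : ℂ} (hz : 0 < z.im) (n : ℕ) : aa z n ≠ 0 :=
  (Nat.rec (sinv_zero z hz) (fun n ih => sinv_step z hz n ih) n : SInv z n).1

lemma aeval_conj (p : Polynomial ℝ) (w : ℂ) :
    Polynomial.aeval ((starRingEnd ℂ) w) p = (starRingEnd ℂ) (Polynomial.aeval w p) := by
  rw [Polynomial.aeval_def, Polynomial.aeval_def, Polynomial.hom_eval₂]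
  congr 1
  exact RingHom.ext fun r => (Complex.conj_ofReal r).symm

lemma fibP_ne_zero_of_im_ne {w : ℂ} (hw : w.im ≠ 0) (n : ℕ) :
    Polynomial.aeval w (fibP n).1 ≠ 0 := by
  rcases hw.lt_or_gt with h | h
  · have h' : 0 < ((starRingEnd ℂ) w).im := by
      simpa using neg_pos.2 h
    intro h0
    apply aa_ne_zero h' n
    show Polynomial.aeval ((starRingEnd ℂ) w) (fibP n).1 = 0
    rw [aeval_conj, h0, map_zero]
  · exact aa_ne_zero h n


lemma indepPoly_eq_ipoly {V : Type*} [Finite V] (G : SimpleGraph V) :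
    indepPoly G = @ipoly V (Fintype.ofFinite V) G (fun _ => True) := by
  unfold indepPoly ipoly
  rw [Finset.sum_filter]
  refine Finset.sum_congr rfl fun s _ => ?_
  by_cases h : indepS G s
  · rw [if_pos (by exact h), if_pos ⟨h, trivial⟩]
  · rw [if_neg (by exact h), if_neg (by simp [h])]

theorem fibTree_real_rooted (n : ℕ) (z : ℂ)
    (hz : ((indepPoly (fibGraph n)).map (algebraMap ℝ ℂ)).IsRoot z) :
    z.im = 0 := by
  by_contra h
  have heq : indepPoly (fibGraph n) = (fibP n).1 := by
    rw [indepPoly_eq_ipoly]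
    exact (ipoly_fib n).1
  rw [heq] at hz
  apply fibP_ne_zero_of_im_ne h n
  rw [Polynomial.IsRoot, Polynomial.eval_map] at hz
  rwa [Polynomial.aeval_def]
end

section
/- For every n ≥ 4, all complex roots of the independence polynomial I(A_n,x) of the apple graph A_n are real, where A_n is obtained from a path on vertices 1,...,n by adding the edge (2,n). -/
open Polynomial

/-- The apple graph `Aₙ`: a path on vertices `0, 1, …, n - 1` together with the extra
edge between vertex `1` and vertex `n - 1` (vertices `2` and `n` in 1-indexed
labelling). -/
def apple (n : ℕ) : SimpleGraph (Fin n) :=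
  SimpleGraph.fromRel (fun i j =>
    (i : ℕ) + 1 = (j : ℕ) ∨ ((i : ℕ) = 1 ∧ (j : ℕ) = n - 1))

section Aux
open Finset

def pathG (m : ℕ) : SimpleGraph (Fin m) :=
  SimpleGraph.fromRel (fun i j => (i : ℕ) + 1 = (j : ℕ))

def cycG (m : ℕ) : SimpleGraph (Fin m) :=
  SimpleGraph.fromRel (fun i j => (i : ℕ) + 1 = (j : ℕ) ∨ ((i : ℕ) = 0 ∧ (j : ℕ) = m - 1))

/-- Sum of `X ^ s.card` over all finsets satisfying `P`. -/
noncomputable def WSum {α : Type*} [Fintype α] (P : Finset α → Prop) : Polynomial ℝ :=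
  ∑ s ∈ @Finset.filter _ P (Classical.decPred P) Finset.univ, X ^ s.card

noncomputable def ISum {V : Type*} [Fintype V] (G : SimpleGraph V) : Polynomial ℝ :=
  WSum (fun s : Finset V => ∀ u ∈ s, ∀ v ∈ s, ¬G.Adj u v)

lemma indepPoly_eq_ISum {V : Type*} [Fintype V] (G : SimpleGraph V) :
    indepPoly G = ISum G := by
  unfold indepPoly ISum WSum
  rw [Subsingleton.elim (Fintype.ofFinite V) ‹Fintype V›]

def emb (a b k : ℕ) (h : a + k ≤ b) : Fin a ↪ Fin b :=
  ⟨fun y => ⟨(y : ℕ) + k, by omega⟩, by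
    intro x y hxy
    have := congrArg Fin.val hxy
    simp only at this
    exact Fin.ext (by omega)⟩

@[simp] lemma emb_val (a b k : ℕ) (h : a + k ≤ b) (y : Fin a) :
    ((emb a b k h y : Fin b) : ℕ) = (y : ℕ) + k := rfl

section transfer
variable {α β : Type*} [Fintype α] [Fintype β] [DecidableEq α] [DecidableEq β]

lemma transfer_sum (P : Finset α → Prop) (Q : Finset β → Prop) (e : β ↪ α)
    (hrange : ∀ s : Finset α, P s → ∀ x ∈ s, ∃ y, e y = x)
    (hiff : ∀ t : Finset β, P (t.map e) ↔ Q t) :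
    WSum P = WSum Q := by
  unfold WSum
  have himg : @Finset.filter _ P (Classical.decPred P) univ
      = ((@Finset.filter _ Q (Classical.decPred Q) univ).image (fun t => t.map e)) := by
    ext s
    simp only [mem_filter, mem_image, mem_univ, true_and]
    constructor
    · intro hs
      have hmap : (s.preimage e e.injective.injOn).map e = s := by
        ext x
        simp only [Finset.mem_map, Finset.mem_preimage]
        constructor
        · rintro ⟨y, hy, rfl⟩; exact hy
        · intro hx; obtain ⟨y, rfl⟩ := hrange s hs x hx; exact ⟨y, hx, rfl⟩
      exact ⟨s.preimage e e.injective.injOn, by rw [← hiff, hmap]; exact hs, hmap⟩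
    · rintro ⟨t, ht, rfl⟩; exact (hiff t).2 ht
  rw [himg, Finset.sum_image]
  · simp
  · intro t1 _ t2 _ h
    exact Finset.map_injective e h

lemma transfer_sum_insert (a : α) (P : Finset α → Prop) (Q : Finset β → Prop) (e : β ↪ α)
    (hea : ∀ y, e y ≠ a)
    (hrange : ∀ s : Finset α, P s → a ∈ s → ∀ x ∈ s, x ≠ a → ∃ y, e y = x)
    (hiff : ∀ t : Finset β, P (insert a (t.map e)) ↔ Q t) :
    WSum (fun s => P s ∧ a ∈ s) = X * WSum Q := by
  unfold WSum
  have himg : @Finset.filter _ (fun s => P s ∧ a ∈ s)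
        (Classical.decPred _) univ
      = ((@Finset.filter _ Q (Classical.decPred Q) univ).image
          (fun t => insert a (t.map e))) := by
    ext s
    simp only [mem_filter, mem_image, mem_univ, true_and]
    constructor
    · rintro ⟨hP, haS⟩
      have hmap : ((s.erase a).preimage e e.injective.injOn).map e = s.erase a := by
        ext x
        simp only [Finset.mem_map, Finset.mem_preimage]
        constructor
        · rintro ⟨y, hy, rfl⟩; exact hy
        · intro hx
          obtain ⟨y, rfl⟩ := hrange s hP haS x (Finset.mem_of_mem_erase hx)
            (Finset.ne_of_mem_erase hx)
          exact ⟨y, hx, rfl⟩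
      refine ⟨(s.erase a).preimage e e.injective.injOn, ?_, ?_⟩
      · rw [← hiff, hmap, Finset.insert_erase haS]; exact hP
      · rw [hmap, Finset.insert_erase haS]
    · rintro ⟨t, ht, rfl⟩
      exact ⟨(hiff t).2 ht, Finset.mem_insert_self _ _⟩
  rw [himg, Finset.sum_image, Finset.mul_sum]
  · refine Finset.sum_congr rfl fun t _ => ?_
    have hnot : a ∉ t.map e := by
      simp only [Finset.mem_map]; rintro ⟨y, _, h⟩; exact hea y h
    rw [Finset.card_insert_of_notMem hnot, Finset.card_map, pow_succ, mul_comm]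
  · intro t1 _ t2 _ h
    have h1 : a ∉ t1.map e := by
      simp only [Finset.mem_map]; rintro ⟨y, _, hy⟩; exact hea y hy
    have h2 : a ∉ t2.map e := by
      simp only [Finset.mem_map]; rintro ⟨y, _, hy⟩; exact hea y hy
    have : t1.map e = t2.map e := by
      have := congrArg (fun s => Finset.erase s a) h
      simpa [Finset.erase_insert h1, Finset.erase_insert h2] using this
    exact Finset.map_injective e this

lemma split_sum (a : α) (P : Finset α → Prop) :
    WSum P = WSum (fun s => P s ∧ a ∉ s) + WSum (fun s => P s ∧ a ∈ s) := by
  classical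
  unfold WSum
  rw [← Finset.sum_filter_add_sum_filter_not
    (@Finset.filter _ P (Classical.decPred P) univ) (fun s => a ∉ s)]
  congr 1
  · rw [Finset.filter_filter]
    apply Finset.sum_congr _ (fun _ _ => rfl)
    ext s; simp
  · rw [Finset.filter_filter]
    apply Finset.sum_congr _ (fun _ _ => rfl)
    ext s; simp

lemma indep_map_iff (e : β ↪ α) (G : SimpleGraph α) (H : SimpleGraph β)
    (h : ∀ u v, G.Adj (e u) (e v) ↔ H.Adj u v) (t : Finset β) :
    (∀ u ∈ t.map e, ∀ v ∈ t.map e, ¬G.Adj u v) ↔ (∀ u ∈ t, ∀ v ∈ t, ¬H.Adj u v) := by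
  simp only [Finset.mem_map]
  constructor
  · intro H1 u hu v hv
    rw [← h]; exact H1 _ ⟨u, hu, rfl⟩ _ ⟨v, hv, rfl⟩
  · rintro H1 u ⟨u', hu', rfl⟩ v ⟨v', hv', rfl⟩
    rw [h]; exact H1 _ hu' _ hv'

lemma indep_insert_map_iff (a : α) (e : β ↪ α) (G : SimpleGraph α) (H : SimpleGraph β)
    (h : ∀ u v, G.Adj (e u) (e v) ↔ H.Adj u v)
    (hna : ∀ u, ¬ G.Adj a (e u)) (t : Finset β) :
    (∀ u ∈ insert a (t.map e), ∀ v ∈ insert a (t.map e), ¬G.Adj u v)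
      ↔ (∀ u ∈ t, ∀ v ∈ t, ¬H.Adj u v) := by
  simp only [Finset.mem_insert, Finset.mem_map]
  constructor
  · intro H1 u hu v hv
    rw [← h]; exact H1 _ (Or.inr ⟨u, hu, rfl⟩) _ (Or.inr ⟨v, hv, rfl⟩)
  · rintro H1 u (rfl | ⟨u', hu', rfl⟩) v (rfl | ⟨v', hv', rfl⟩)
    · exact fun hadj => G.irrefl hadj
    · exact hna v'
    · intro hadj; exact hna u' hadj.symm
    · rw [h]; exact H1 _ hu' _ hv'

lemma ISum_split {γ : Type*} [Fintype γ] [DecidableEq γ]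
    (G : SimpleGraph α) (H1 : SimpleGraph β) (H2 : SimpleGraph γ) (a : α)
    (e1 : β ↪ α) (e2 : γ ↪ α)
    (hadj1 : ∀ u v, G.Adj (e1 u) (e1 v) ↔ H1.Adj u v)
    (he1a : ∀ y, e1 y ≠ a)
    (hr1 : ∀ x : α, x ≠ a → ∃ y, e1 y = x)
    (hadj2 : ∀ u v, G.Adj (e2 u) (e2 v) ↔ H2.Adj u v)
    (hna : ∀ u, ¬ G.Adj a (e2 u))
    (he2a : ∀ y, e2 y ≠ a)
    (hr2 : ∀ s : Finset α, (∀ u ∈ s, ∀ v ∈ s, ¬ G.Adj u v) → a ∈ s →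
      ∀ x ∈ s, x ≠ a → ∃ y, e2 y = x) :
    ISum G = ISum H1 + X * ISum H2 := by
  unfold ISum
  rw [split_sum a]
  congr 1
  · refine transfer_sum _ _ e1 ?_ ?_
    · rintro s ⟨hi, hns⟩ x hx
      exact hr1 x (fun h => hns (h ▸ hx))
    · intro t
      rw [and_iff_left_of_imp, indep_map_iff e1 G H1 hadj1]
      intro _ hmem
      obtain ⟨y, _, hy⟩ := Finset.mem_map.1 hmem
      exact he1a y hy
  · refine transfer_sum_insert a _ _ e2 he2a hr2 ?_
    intro t
    exact indep_insert_map_iff a e2 G H2 hadj2 hna t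

end transfer

lemma path_rec (m : ℕ) :
    ISum (pathG (m + 2)) = ISum (pathG (m + 1)) + X * ISum (pathG m) := by
  apply ISum_split _ _ _ (Fin.last (m + 1))
    (emb (m + 1) (m + 2) 0 (by omega)) (emb m (m + 2) 0 (by omega))
  · intro u v
    have hu := u.isLt; have hv := v.isLt
    simp [pathG, SimpleGraph.fromRel_adj, Fin.ext_iff]
  · intro y
    have := y.isLt
    simp [Fin.ext_iff, Fin.last]; omega
  · intro x hx
    have h1 := x.isLt
    have h2 : (x : ℕ) ≠ m + 1 := by
      intro h; exact hx (Fin.ext (by simp [Fin.last, h]))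
    exact ⟨⟨(x : ℕ), by omega⟩, Fin.ext (by simp)⟩
  · intro u v
    have hu := u.isLt; have hv := v.isLt
    simp [pathG, SimpleGraph.fromRel_adj, Fin.ext_iff]
  · intro u
    have := u.isLt
    simp [pathG, SimpleGraph.fromRel_adj, Fin.ext_iff, Fin.last]
    try omega
  · intro y
    have := y.isLt
    simp [Fin.ext_iff, Fin.last]; omega
  · intro s hi hlast x hx hxne
    have h1 := x.isLt
    have h2 : (x : ℕ) ≠ m + 1 := by
      intro h; exact hxne (Fin.ext (by simp [Fin.last, h]))
    have h3 : ¬ (pathG (m + 2)).Adj x (Fin.last (m + 1)) := hi x hx _ hlast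
    have h4 : (x : ℕ) ≠ m := by
      intro h
      apply h3
      simp [pathG, SimpleGraph.fromRel_adj, Fin.ext_iff, Fin.last]
      omega
    exact ⟨⟨(x : ℕ), by omega⟩, Fin.ext (by simp)⟩

lemma cyc_rec (m : ℕ) :
    ISum (cycG (m + 3)) = ISum (pathG (m + 2)) + X * ISum (pathG m) := by
  apply ISum_split _ _ _ (0 : Fin (m + 3))
    (emb (m + 2) (m + 3) 1 (by omega)) (emb m (m + 3) 2 (by omega))
  · intro u v
    have hu := u.isLt; have hv := v.isLt
    simp [cycG, pathG, SimpleGraph.fromRel_adj, Fin.ext_iff, -Fin.val_eq_zero_iff]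
    try omega
  · intro y
    simp [Fin.ext_iff, -Fin.val_eq_zero_iff]
  · intro x hx
    have h1 := x.isLt
    have h2 : (x : ℕ) ≠ 0 := by
      intro h; exact hx (Fin.ext (by simp [h]))
    exact ⟨⟨(x : ℕ) - 1, by omega⟩, Fin.ext (by simp; omega)⟩
  · intro u v
    have hu := u.isLt; have hv := v.isLt
    simp [cycG, pathG, SimpleGraph.fromRel_adj, Fin.ext_iff, -Fin.val_eq_zero_iff]
    try omega
  · intro u
    have := u.isLt
    simp [cycG, SimpleGraph.fromRel_adj, Fin.ext_iff, -Fin.val_eq_zero_iff]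
    try omega
  · intro y
    simp [Fin.ext_iff]
  · intro s hi h0 x hx hxne
    have h1 := x.isLt
    have h2 : (x : ℕ) ≠ 0 := by
      intro h; exact hxne (Fin.ext (by simp [h]))
    have h3 : ¬ (cycG (m + 3)).Adj (0 : Fin (m + 3)) x := hi _ h0 x hx
    have h4a : (x : ℕ) ≠ 1 := by
      intro h; apply h3
      simp [cycG, SimpleGraph.fromRel_adj, Fin.ext_iff, h, -Fin.val_eq_zero_iff]
    have h4b : (x : ℕ) ≠ m + 2 := by
      intro h; apply h3
      simp [cycG, SimpleGraph.fromRel_adj, Fin.ext_iff, h, -Fin.val_eq_zero_iff]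
    exact ⟨⟨(x : ℕ) - 2, by omega⟩, Fin.ext (by simp; omega)⟩

lemma apple_rec (m : ℕ) (hm : 2 ≤ m) :
    ISum (apple (m + 2)) = ISum (cycG (m + 1)) + X * ISum (pathG m) := by
  apply ISum_split _ _ _ (0 : Fin (m + 2))
    (emb (m + 1) (m + 2) 1 (by omega)) (emb m (m + 2) 2 (by omega))
  · intro u v
    have hu := u.isLt; have hv := v.isLt
    simp [apple, cycG, SimpleGraph.fromRel_adj, Fin.ext_iff, -Fin.val_eq_zero_iff]
    try omega
  · intro y
    simp [Fin.ext_iff, -Fin.val_eq_zero_iff]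
  · intro x hx
    have h1 := x.isLt
    have h2 : (x : ℕ) ≠ 0 := by
      intro h; exact hx (Fin.ext (by simp [h]))
    exact ⟨⟨(x : ℕ) - 1, by omega⟩, Fin.ext (by simp; omega)⟩
  · intro u v
    have hu := u.isLt; have hv := v.isLt
    simp [apple, pathG, SimpleGraph.fromRel_adj, Fin.ext_iff]
    try omega
  · intro u
    have := u.isLt
    simp [apple, SimpleGraph.fromRel_adj, Fin.ext_iff]
    try omega
  · intro y
    simp [Fin.ext_iff]
  · intro s hi h0 x hx hxne
    have h1 := x.isLt
    have h2 : (x : ℕ) ≠ 0 := by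
      intro h; exact hxne (Fin.ext (by simp [h]))
    have h3 : ¬ (apple (m + 2)).Adj (0 : Fin (m + 2)) x := hi _ h0 x hx
    have h4 : (x : ℕ) ≠ 1 := by
      intro h; apply h3
      simp [apple, SimpleGraph.fromRel_adj, Fin.ext_iff, h]
    exact ⟨⟨(x : ℕ) - 2, by omega⟩, Fin.ext (by simp; omega)⟩

lemma my_filter_true {α : Type*} (p : α → Prop) (h : DecidablePred p) (s : Finset α)
    (H : ∀ x ∈ s, p x) : @Finset.filter _ p h s = s :=
  Finset.filter_true_of_mem H

lemma path0 : ISum (pathG 0) = 1 := by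
  unfold ISum WSum
  have h : ∀ s ∈ (Finset.univ : Finset (Finset (Fin 0))),
      (∀ u ∈ s, ∀ v ∈ s, ¬(pathG 0).Adj u v) := by
    intro s _ u hu; exact u.elim0
  rw [my_filter_true _ _ _ h,
    show (Finset.univ : Finset (Finset (Fin 0))) = {∅} from by decide]
  simp

lemma path1 : ISum (pathG 1) = 1 + X := by
  unfold ISum WSum
  have h : ∀ s ∈ (Finset.univ : Finset (Finset (Fin 1))),
      (∀ u ∈ s, ∀ v ∈ s, ¬(pathG 1).Adj u v) := by
    intro s _ u _ v _
    have : u = v := Subsingleton.elim u v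
    subst this
    exact (pathG 1).irrefl
  rw [my_filter_true _ _ _ h,
    show (Finset.univ : Finset (Finset (Fin 1))) = {∅, {0}} from by decide,
    Finset.sum_pair (by decide)]
  simp

/-- Independence polynomial of the path, by its Fibonacci-style recursion. -/
noncomputable def pp : ℕ → Polynomial ℝ
  | 0 => 1
  | 1 => 1 + X
  | (m + 2) => pp (m + 1) + X * pp m

lemma ISum_path : ∀ m, ISum (pathG m) = pp m := by
  intro m
  induction m using Nat.strong_induction_on with
  | _ m ih =>
    match m with
    | 0 => exact path0
    | 1 => exact path1
    | (k + 2) =>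
      rw [path_rec, ih (k + 1) (by omega), ih k (by omega)]
      rfl

/-- The independence polynomial of the apple graph in terms of `pp`. -/
lemma apple_eq (m : ℕ) :
    ISum (apple (m + 4)) = (1 + X) * pp (m + 2) + X * pp m := by
  have h1 : ISum (apple ((m + 2) + 2)) = ISum (cycG (m + 3)) + X * ISum (pathG (m + 2)) :=
    apple_rec (m + 2) (by omega)
  have h2 := cyc_rec m
  have e1 : m + 2 + 2 = m + 4 := by omega
  rw [e1] at h1
  rw [h1, h2, ISum_path, ISum_path]
  ring

lemma pp_coeff_nonneg : ∀ k, ∀ i, 0 ≤ (pp k).coeff i := by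
  intro k
  induction k using Nat.strong_induction_on with
  | _ k ih =>
    match k with
    | 0 => intro i; simp [pp, coeff_one]; positivity
    | 1 => intro i
           simp only [pp, coeff_add, coeff_one, coeff_X]
           positivity
    | (j + 2) =>
      intro i
      have h1 := ih (j + 1) (by omega) i
      have h2 := ih j (by omega)
      show (0:ℝ) ≤ (pp (j + 1) + X * pp j).coeff i
      rw [coeff_add]
      obtain _ | i' := i
      · rw [mul_comm, coeff_mul_X_zero]
        simpa using h1
      · rw [coeff_X_mul]
        exact add_nonneg h1 (h2 i')

lemma pp_deg : ∀ k, (pp k).natDegree = (k + 1) / 2 ∧ 0 < (pp k).coeff ((k + 1) / 2) := by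
  intro k
  induction k using Nat.strong_induction_on with
  | _ k ih =>
    match k with
    | 0 => constructor <;> simp [pp]
    | 1 => constructor
           · simp [pp]; rw [show (1 : Polynomial ℝ) + X = X + 1 from by ring]
             simpa using natDegree_X_add_C (1 : ℝ)
           · simp [pp, coeff_one]
    | (j + 2) =>
      obtain ⟨hd1, hc1⟩ := ih (j + 1) (by omega)
      obtain ⟨hd2, hc2⟩ := ih j (by omega)
      have hXd : (X * pp j).natDegree = (j + 1) / 2 + 1 := by
        rw [mul_comm, natDegree_mul_X (fun h => by simp [h] at hc2)]
        omega
      have hD : (j + 2 + 1) / 2 = (j + 1) / 2 + 1 := by omega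
      have hcoeff : (pp (j + 2)).coeff ((j + 2 + 1) / 2)
          = (pp (j + 1)).coeff ((j + 2 + 1) / 2) + (pp j).coeff ((j + 1) / 2) := by
        show (pp (j + 1) + X * pp j).coeff _ = _
        rw [coeff_add, hD, coeff_X_mul]
      have hpos : 0 < (pp (j + 2)).coeff ((j + 2 + 1) / 2) := by
        rw [hcoeff]
        have := pp_coeff_nonneg (j + 1) ((j + 2 + 1) / 2)
        linarith
      constructor
      · apply le_antisymm
        · show (pp (j + 1) + X * pp j).natDegree ≤ _
          refine le_trans (natDegree_add_le _ _) ?_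
          rw [hd1, hXd]
          omega
        · exact le_natDegree_of_ne_zero (ne_of_gt hpos)
      · exact hpos

lemma sin_rec (a θ : ℝ) :
    Real.sin (a + 2*θ) = 2 * Real.cos θ * Real.sin (a + θ) - Real.sin a := by
  rw [Real.sin_add a (2*θ), Real.sin_add a θ, Real.sin_two_mul, Real.cos_two_mul]
  ring

lemma pp_trig : ∀ k : ℕ, ∀ θ : ℝ, Real.cos θ ≠ 0 →
    Real.sin θ * (2 * Real.cos θ)^(k+1) * (pp k).eval (-(1/(4 * Real.cos θ^2)))
      = Real.sin (((k : ℝ)+2)*θ) := by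
  intro k
  induction k using Nat.strong_induction_on with
  | _ k ih =>
    match k with
    | 0 =>
      intro θ hc
      show Real.sin θ * (2 * Real.cos θ)^1 * (1 : Polynomial ℝ).eval _ = _
      rw [eval_one]
      push_cast
      rw [show ((0:ℝ)+2)*θ = 2*θ from by ring, Real.sin_two_mul]
      ring
    | 1 =>
      intro θ hc
      show Real.sin θ * (2 * Real.cos θ)^2 * (1 + X : Polynomial ℝ).eval _ = _
      rw [show ((1:ℕ):ℝ)+2 = 2+1 from by norm_num, show ((2:ℝ)+1)*θ = θ + 2*θ from by ring,
        sin_rec, show θ + θ = 2*θ from by ring, Real.sin_two_mul]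
      simp only [eval_add, eval_one, eval_X]
      field_simp
      ring
    | (j + 2) =>
      intro θ hc
      have ih1 := ih (j + 1) (by omega) θ hc
      have ih0 := ih j (by omega) θ hc
      have ha : ((j:ℝ) + 2 + 2)*θ = ((j:ℝ)+2)*θ + 2*θ := by ring
      have hb : ((j:ℝ)+2)*θ + θ = ((j:ℝ)+1+2)*θ := by ring
      have hcast : (((j:ℕ)+2:ℕ):ℝ) + 2 = ((j:ℝ) + 2 + 2) := by push_cast; ring
      rw [hcast, ha, sin_rec, hb]
      push_cast at ih1 ih0
      rw [← ih1, ← ih0]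
      show Real.sin θ * (2*Real.cos θ)^(j+2+1) * (pp (j+1) + X * pp j).eval _ = _
      simp only [eval_add, eval_mul, eval_X]
      field_simp
      ring

noncomputable def qq (m : ℕ) : Polynomial ℝ := (1 + X) * pp (m + 2) + X * pp m

lemma apple_qq (m : ℕ) : ISum (apple (m + 4)) = qq m := apple_eq m

lemma qq_trig (m : ℕ) (θ : ℝ) (hc : Real.cos θ ≠ 0) :
    Real.sin θ * (2 * Real.cos θ)^(m+3) * (qq m).eval (-(1/(4 * Real.cos θ^2)))
      = (1 + -(1/(4 * Real.cos θ^2))) * Real.sin (((m:ℝ)+4)*θ)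
        - Real.sin (((m:ℝ)+2)*θ) := by
  have h2 := pp_trig (m + 2) θ hc
  have h0 := pp_trig m θ hc
  push_cast at h2 h0
  rw [show ((m:ℝ)+4)*θ = ((m:ℝ)+2+2)*θ from by ring, ← h2, ← h0]
  unfold qq
  simp only [eval_add, eval_mul, eval_X, eval_one]
  field_simp
  ring

lemma pp_eval0 : ∀ k, (pp k).eval 0 = 1 := by
  intro k
  induction k using Nat.strong_induction_on with
  | _ k ih =>
    match k with
    | 0 => simp [pp]
    | 1 => simp [pp]
    | (j + 2) =>
      show (pp (j + 1) + X * pp j : Polynomial ℝ).eval 0 = 1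
      simp [ih (j + 1) (by omega)]

lemma qq_eval0 (m : ℕ) : (qq m).eval 0 = 1 := by
  unfold qq
  simp [pp_eval0]

lemma qq_deg (m : ℕ) :
    (qq m).natDegree = (m + 1) / 2 + 2 ∧ 0 < (qq m).coeff ((m + 1) / 2 + 2) := by
  set M := (m + 1) / 2 + 2 with hM
  obtain ⟨hd2, hc2⟩ := pp_deg (m + 2)
  obtain ⟨hd0, hc0⟩ := pp_deg m
  have hcM : (qq m).coeff ((m + 3) / 2 + 1) = (pp (m + 2)).coeff ((m + 3) / 2) := by
    unfold qq
    rw [show (1 + X) * pp (m + 2) = pp (m + 2) + X * pp (m + 2) from by ring]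
    rw [coeff_add, coeff_add, coeff_X_mul, coeff_X_mul,
      coeff_eq_zero_of_natDegree_lt (by omega : (pp (m + 2)).natDegree < (m + 3) / 2 + 1),
      coeff_eq_zero_of_natDegree_lt (by omega : (pp m).natDegree < (m + 3) / 2)]
    ring
  have hpos : 0 < (qq m).coeff M := by
    rw [show M = (m + 3) / 2 + 1 from by omega, hcM,
      show (m + 3) / 2 = (m + 2 + 1) / 2 from by omega]
    exact hc2
  constructor
  · apply le_antisymm
    · unfold qq
      refine le_trans (natDegree_add_le _ _) ?_
      have b1 : ((1 + X) * pp (m + 2)).natDegree ≤ M := by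
        refine le_trans (natDegree_mul_le) ?_
        have : (1 + X : Polynomial ℝ).natDegree ≤ 1 := by
          refine le_trans (natDegree_add_le _ _) ?_
          simp
        omega
      have b2 : (X * pp m).natDegree ≤ M := by
        refine le_trans (natDegree_mul_le) ?_
        simp only [natDegree_X]
        omega
      omega
    · exact le_natDegree_of_ne_zero (ne_of_gt hpos)
  · exact hpos

lemma qq_ne_zero (m : ℕ) : qq m ≠ 0 := fun h => by simpa [h] using qq_eval0 m

lemma qq_lc_pos (m : ℕ) : 0 < (qq m).leadingCoeff := by
  obtain ⟨hd, hc⟩ := qq_deg m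
  rw [Polynomial.leadingCoeff, hd]
  exact hc

lemma exists_many_roots (f : Polynomial ℝ) (M : ℕ) (w : ℕ → ℝ)
    (hw : ∀ i j : ℕ, i < j → j ≤ M → w j < w i)
    (hs : ∀ j ≤ M, 0 < (-1:ℝ)^j * f.eval (w j)) :
    M ≤ f.roots.toFinset.card := by
  have hf0 : f ≠ 0 := by
    intro h
    have := hs 0 (by omega)
    simp [h] at this
  have hroot : ∀ j : Fin M, ∃ r, r ∈ Set.Ioo (w ((j:ℕ)+1)) (w (j:ℕ)) ∧ f.eval r = 0 := by
    intro ⟨j, hj⟩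
    simp only
    have hlt : w (j+1) < w j := hw j (j+1) (by omega) (by omega)
    have hsj := hs j (by omega)
    have hsj1 := hs (j+1) (by omega)
    have hcont : ContinuousOn (fun x => f.eval x) (Set.Icc (w (j+1)) (w j)) :=
      f.continuous.continuousOn
    rcases Nat.even_or_odd j with he | ho
    · have h1 : 0 < f.eval (w j) := by rwa [he.neg_one_pow, one_mul] at hsj
      have h2 : f.eval (w (j+1)) < 0 := by
        rw [(Even.add_one he).neg_one_pow] at hsj1
        linarith
      obtain ⟨r, hr, hr0⟩ := intermediate_value_Ioo (le_of_lt hlt) hcont ⟨h2, h1⟩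
      exact ⟨r, hr, hr0⟩
    · have h1 : f.eval (w j) < 0 := by
        rw [ho.neg_one_pow] at hsj
        linarith
      have h2 : 0 < f.eval (w (j+1)) := by
        rwa [(Odd.add_one ho).neg_one_pow, one_mul] at hsj1
      obtain ⟨r, hr, hr0⟩ := intermediate_value_Ioo' (le_of_lt hlt) hcont ⟨h1, h2⟩
      exact ⟨r, hr, hr0⟩
  choose r hmem h0 using hroot
  have hanti : ∀ i j : Fin M, (i:ℕ) < (j:ℕ) → r j < r i := by
    intro i j hij
    have h1 : r j < w (j:ℕ) := (hmem j).2
    have h3 : w ((i:ℕ)+1) < r i := (hmem i).1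
    have h2 : w (j:ℕ) ≤ w ((i:ℕ)+1) := by
      rcases eq_or_lt_of_le (by omega : (i:ℕ)+1 ≤ (j:ℕ)) with h | h
      · exact le_of_eq (by rw [h])
      · exact le_of_lt (hw ((i:ℕ)+1) (j:ℕ) h (le_of_lt j.2))
    linarith
  have hinj : Set.InjOn r ↑(Finset.univ : Finset (Fin M)) := by
    intro a _ b _ hab
    rcases lt_trichotomy (a:ℕ) (b:ℕ) with h | h | h
    · exact absurd hab (by have := hanti a b h; intro he; rw [he] at this; linarith)
    · exact Fin.ext h
    · exact absurd hab (by have := hanti b a h; intro he; rw [he] at this; linarith)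
  have hmaps : ∀ j ∈ (Finset.univ : Finset (Fin M)), r j ∈ f.roots.toFinset := by
    intro j _
    rw [Multiset.mem_toFinset, Polynomial.mem_roots hf0]
    exact h0 j
  calc M = (Finset.univ : Finset (Fin M)).card := by simp
    _ ≤ f.roots.toFinset.card := Finset.card_le_card_of_injOn r hmaps hinj

open Filter in
lemma qq_splits (m : ℕ) : (qq m).Splits := by
  rw [Polynomial.splits_iff_card_roots]
  obtain ⟨hdeg, hcpos⟩ := qq_deg m
  set M := (m + 1) / 2 + 2 with hM
  have hπ := Real.pi_pos
  have hm4 : (0:ℝ) < (m:ℝ) + 4 := by positivity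
  set v : ℕ → ℝ := fun j => -(1/(4 * Real.cos ((j:ℝ)*Real.pi/((m:ℝ)+4))^2)) with hv
  have hθpos : ∀ j : ℕ, 1 ≤ j → 0 < (j:ℝ)*Real.pi/((m:ℝ)+4) := by
    intro j hj
    have : (1:ℝ) ≤ (j:ℝ) := by exact_mod_cast hj
    positivity
  have hθlt : ∀ j : ℕ, j ≤ M - 1 → (j:ℝ)*Real.pi/((m:ℝ)+4) < Real.pi/2 := by
    intro j hj
    have hj2 : 2*(j:ℝ) < (m:ℝ)+4 := by exact_mod_cast (by omega : 2*j < m+4)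
    rw [div_lt_iff₀ hm4]
    nlinarith
  have hcos : ∀ j : ℕ, 1 ≤ j → j ≤ M - 1 → 0 < Real.cos ((j:ℝ)*Real.pi/((m:ℝ)+4)) := by
    intro j h1 h2
    apply Real.cos_pos_of_mem_Ioo
    constructor
    · have := hθpos j h1; linarith
    · exact hθlt j h2
  have hsin : ∀ j : ℕ, 1 ≤ j → j ≤ M - 1 → 0 < Real.sin ((j:ℝ)*Real.pi/((m:ℝ)+4)) := by
    intro j h1 h2
    exact Real.sin_pos_of_pos_of_lt_pi (hθpos j h1) (by have := hθlt j h2; linarith)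
  have hvneg : ∀ j : ℕ, 1 ≤ j → j ≤ M - 1 → v j < 0 := by
    intro j h1 h2
    have hc := hcos j h1 h2
    have : 0 < 1/(4 * Real.cos ((j:ℝ)*Real.pi/((m:ℝ)+4))^2) := by positivity
    simp only [hv]
    linarith
  have hvlt : ∀ i j : ℕ, 1 ≤ i → i < j → j ≤ M - 1 → v j < v i := by
    intro i j h1 h2 h3
    have hci := hcos i h1 (by omega)
    have hcj := hcos j (by omega) h3
    have hθij : (i:ℝ)*Real.pi/((m:ℝ)+4) < (j:ℝ)*Real.pi/((m:ℝ)+4) := by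
      have hij : (i:ℝ) < (j:ℝ) := by exact_mod_cast h2
      gcongr
    have hclt : Real.cos ((j:ℝ)*Real.pi/((m:ℝ)+4)) < Real.cos ((i:ℝ)*Real.pi/((m:ℝ)+4)) := by
      apply Real.cos_lt_cos_of_nonneg_of_le_pi _ _ hθij
      · exact le_of_lt (hθpos i h1)
      · have := hθlt j h3; linarith
    have hsq : Real.cos ((j:ℝ)*Real.pi/((m:ℝ)+4))^2 < Real.cos ((i:ℝ)*Real.pi/((m:ℝ)+4))^2 := by
      nlinarith
    simp only [hv, neg_lt_neg_iff]
    rw [div_lt_div_iff₀ (by positivity) (by positivity)]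
    nlinarith
  -- sign at the midpoints
  have hsignmid : ∀ j : ℕ, 1 ≤ j → j ≤ M - 1 →
      0 < (-1:ℝ)^j * (qq m).eval (v j) := by
    intro j h1 h2
    set θ := (j:ℝ)*Real.pi/((m:ℝ)+4) with hθ
    have hc := hcos j h1 h2
    have hs := hsin j h1 h2
    have hqt := qq_trig m θ (ne_of_gt hc)
    have e1 : ((m:ℝ)+4)*θ = (j:ℝ)*Real.pi := by
      rw [hθ]; field_simp
    have e2 : ((m:ℝ)+2)*θ = (j:ℝ)*Real.pi - 2*θ := by
      rw [hθ]; field_simp; ring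
    rw [e1, e2, Real.sin_nat_mul_pi, Real.sin_nat_mul_pi_sub] at hqt
    have hs2 : 0 < Real.sin (2*θ) := by
      apply Real.sin_pos_of_pos_of_lt_pi
      · have := hθpos j h1; rw [← hθ] at this; linarith
      · have := hθlt j h2; rw [← hθ] at this; linarith
    have hA : 0 < Real.sin θ * (2*Real.cos θ)^(m+3) := by positivity
    have hj : ((-1:ℝ)^j)*((-1:ℝ)^j) = 1 := by
      rw [← pow_add]
      exact Even.neg_one_pow ⟨j, by ring⟩
    have heval : (-1:ℝ)^j * (qq m).eval (v j)
        = Real.sin (2*θ) / (Real.sin θ * (2*Real.cos θ)^(m+3)) := by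
      rw [eq_div_iff (ne_of_gt hA)]
      have hveq : v j = -(1/(4 * Real.cos θ^2)) := by rw [hv, hθ]
      rw [hveq]
      linear_combination ((-1:ℝ)^j) * hqt + Real.sin (2*θ) * hj
    rw [heval]
    exact div_pos hs2 hA
  -- the far-left point
  have hlcpos := qq_lc_pos m
  have hqne := qq_ne_zero m
  set T : Polynomial ℝ := C ((-1:ℝ)^M) * (qq m).comp (-X) with hT
  have hTc : ((-1:ℝ)^M) ≠ 0 := by positivity
  have hcompdeg : ((qq m).comp (-X)).natDegree = M := by
    rw [natDegree_comp]
    simp [hdeg]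
  have hTdeg : T.natDegree = M := by
    rw [hT, natDegree_C_mul hTc, hcompdeg]
  have hTlc : T.leadingCoeff = (qq m).leadingCoeff := by
    rw [hT, leadingCoeff_mul, leadingCoeff_C, leadingCoeff_comp (by simp)]
    have : (-X : Polynomial ℝ).leadingCoeff = -1 := by
      rw [leadingCoeff_neg, leadingCoeff_X]
    rw [this, hdeg]
    rw [show ((-1:ℝ))^M * ((qq m).leadingCoeff * (-1)^M)
      = (qq m).leadingCoeff * ((-1)^M * (-1)^M) from by ring]
    rw [← pow_add, Even.neg_one_pow ⟨M, by ring⟩, mul_one]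
  have hTne : T ≠ 0 := by
    intro h
    rw [h, leadingCoeff_zero] at hTlc
    exact absurd hTlc.symm (ne_of_gt hlcpos)
  have hTdegpos : 0 < T.degree := by
    rw [degree_eq_natDegree hTne, hTdeg]
    exact_mod_cast (by omega : 0 < M)
  have htend : Tendsto (fun x => T.eval x) atTop atTop :=
    Polynomial.tendsto_atTop_of_leadingCoeff_nonneg T hTdegpos
      (by rw [hTlc]; exact le_of_lt hlcpos)
  have hev1 : ∀ᶠ x in atTop, 0 < T.eval x := htend.eventually_gt_atTop 0
  have hev2 : ∀ᶠ x : ℝ in atTop, -x < v (M-1) :=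
    (eventually_gt_atTop (-(v (M-1)))).mono (fun x hx => by linarith)
  obtain ⟨x0, hx1, hx2⟩ := (hev1.and hev2).exists
  have hx1' : 0 < (-1:ℝ)^M * (qq m).eval (-x0) := by
    have : T.eval x0 = (-1:ℝ)^M * (qq m).eval (-x0) := by
      rw [hT]
      simp [eval_comp]
    rwa [this] at hx1
  -- assemble the point sequence
  set w : ℕ → ℝ := fun j => if j = 0 then 0 else if j ≤ M - 1 then v j else -x0 with hw
  have hw0 : w 0 = 0 := by simp [hw]
  have hwmid : ∀ j, 1 ≤ j → j ≤ M - 1 → w j = v j := by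
    intro j h1 h2
    simp only [hw]
    rw [if_neg (by omega), if_pos (by omega)]
  have hwM : w M = -x0 := by
    simp only [hw]
    rw [if_neg (by omega), if_neg (by omega)]
  have hmono : ∀ i j : ℕ, i < j → j ≤ M → w j < w i := by
    intro i j hij hjM
    rcases Nat.eq_zero_or_pos i with rfl | hi
    · rw [hw0]
      rcases Nat.lt_or_ge j M with h | h
      · rw [hwmid j (by omega) (by omega)]
        exact hvneg j (by omega) (by omega)
      · have hjM' : j = M := by omega
        rw [hjM', hwM]
        have := hvneg (M-1) (by omega) (by omega)
        linarith
    · rcases Nat.lt_or_ge j M with h | h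
      · rw [hwmid j (by omega) (by omega), hwmid i (by omega) (by omega)]
        exact hvlt i j (by omega) hij (by omega)
      · have hjM' : j = M := by omega
        rw [hjM', hwM, hwmid i (by omega) (by omega)]
        rcases Nat.eq_or_lt_of_le (by omega : i ≤ M - 1) with h' | h'
        · rw [h']; exact hx2
        · have := hvlt i (M-1) (by omega) h' (by omega)
          linarith
  have hsign : ∀ j ≤ M, 0 < (-1:ℝ)^j * (qq m).eval (w j) := by
    intro j hjM
    rcases Nat.eq_zero_or_pos j with rfl | hj
    · rw [hw0, qq_eval0]
      norm_num
    · rcases Nat.lt_or_ge j M with h | h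
      · rw [hwmid j (by omega) (by omega)]
        exact hsignmid j (by omega) (by omega)
      · have hjM' : j = M := by omega
        rw [hjM', hwM]
        exact hx1'
  have hlb := exists_many_roots (qq m) M w hmono hsign
  have hub : (qq m).roots.card ≤ M := by
    rw [← hdeg]
    exact (qq m).card_roots'
  have := Multiset.toFinset_card_le (qq m).roots
  omega

end Aux
theorem apple_real_rooted (n : ℕ) (hn : 4 ≤ n) (z : ℂ)
    (hz : ((indepPoly (apple n)).map (algebraMap ℝ ℂ)).IsRoot z) :
    z.im = 0 := by
  obtain ⟨m, rfl⟩ : ∃ m, n = m + 4 := ⟨n - 4, by omega⟩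
  rw [indepPoly_eq_ISum, apple_qq] at hz
  have hmapne : (qq m).map (algebraMap ℝ ℂ) ≠ 0 :=
    Polynomial.map_ne_zero (qq_ne_zero m)
  have hzr : z ∈ ((qq m).map (algebraMap ℝ ℂ)).roots := by
    rw [Polynomial.mem_roots hmapne]
    exact hz
  rw [(qq_splits m).roots_map _] at hzr
  obtain ⟨r, _, hr⟩ := Multiset.mem_map.1 hzr
  rw [← hr]
  simp
end
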